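/- Let 0 < t < 1 and let b = t^N \otimes U acting on \ell^2(\mathbb{N}) \otimes \ell^2(\mathbb{Z}), where t^N e_n = t^n e_n and U is the bilateral shift. Then b is a normal operator and the spectrum of bb* equals \{t^{2m} : m \in \mathbb{N}\} \cup \{0\}. -/

import Mathlib

open scoped InnerProductSpace ComplexConjugate ENNReal NNReal

noncomputable section

namespace Stmt15Aux

abbrev H := lp (fun _ : ℕ × ℤ => ℂ) 2

lemma h2top : (2 : ℝ≥0∞) ≠ ⊤ := by norm_num

lemma h2r : 0 < (2 : ℝ≥0∞).toReal := by norm_num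

lemma ext_single {f g : H →L[ℂ] H}
    (h : ∀ i : ℕ × ℤ, f (lp.single 2 i 1) = g (lp.single 2 i 1)) : f = g := by
  refine ContinuousLinearMap.ext fun x => ?_
  have hs := lp.hasSum_single (E := fun _ : ℕ × ℤ => ℂ) h2top x
  have hf : HasSum (fun i => f (lp.single 2 i (x i))) (f x) := hs.mapL f
  have hg : HasSum (fun i => g (lp.single 2 i (x i))) (g x) := hs.mapL g
  have key : (fun i => f (lp.single 2 i (x i))) = fun i => g (lp.single 2 i (x i)) := by
    funext i
    have h1 : lp.single (E := fun _ : ℕ × ℤ => ℂ) 2 i (x i) = (x i) • lp.single 2 i 1 := by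
      rw [← lp.single_smul]
      congr 1
      simp
    rw [h1, map_smul, map_smul, h i]
  rw [key] at hf
  exact hf.unique hg

lemma memℓp_diag {c : ℕ × ℤ → ℂ} {C : ℝ} (hc : ∀ i, ‖c i‖ ≤ C) (x : H) :
    Memℓp (fun i => c i * x i) 2 := by
  apply memℓp_gen
  have hx : Summable fun i => ‖x i‖ ^ (2 : ℝ≥0∞).toReal := (lp.memℓp x).summable h2r
  refine Summable.of_nonneg_of_le (fun i => ?_) (fun i => ?_)
    (hx.mul_left (C ^ (2 : ℝ≥0∞).toReal))
  · positivity
  · rw [norm_mul, Real.mul_rpow (norm_nonneg _) (norm_nonneg _)]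
    exact mul_le_mul_of_nonneg_right
      (Real.rpow_le_rpow (norm_nonneg _) (hc _) h2r.le) (by positivity)

def diag (c : ℕ × ℤ → ℂ) {C : ℝ} (hc : ∀ i, ‖c i‖ ≤ C) : H →L[ℂ] H :=
  LinearMap.mkContinuous
    { toFun := fun x => ⟨fun i => c i * x i, memℓp_diag hc x⟩
      map_add' := fun x y => lp.ext (funext fun i => by
        simp only [lp.coeFn_add, Pi.add_apply]
        show c i * ((x : ∀ _ : ℕ × ℤ, ℂ) i + (y : ∀ _ : ℕ × ℤ, ℂ) i) = _
        ring_nf)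
      map_smul' := fun r x => lp.ext (funext fun i => by
        show c i * (r • x : H) i = (r • (⟨fun i => c i * x i, memℓp_diag hc x⟩ : H)) i
        rw [lp.coeFn_smul, lp.coeFn_smul]
        simp [smul_eq_mul]
        ring) }
    C
    (fun x => by
      have hC : 0 ≤ C := le_trans (norm_nonneg _) (hc (0, 0))
      set y : H := ⟨fun i => c i * x i, memℓp_diag hc x⟩
      have hy : ‖y‖ ^ (2 : ℝ≥0∞).toReal = ∑' i, ‖c i * x i‖ ^ (2 : ℝ≥0∞).toReal :=
        lp.norm_rpow_eq_tsum h2r y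
      have hx : ‖x‖ ^ (2 : ℝ≥0∞).toReal = ∑' i, ‖x i‖ ^ (2 : ℝ≥0∞).toReal :=
        lp.norm_rpow_eq_tsum h2r x
      have hle : ‖y‖ ^ (2 : ℝ≥0∞).toReal ≤ (C * ‖x‖) ^ (2 : ℝ≥0∞).toReal := by
        rw [hy, Real.mul_rpow hC (norm_nonneg _), hx, ← tsum_mul_left]
        refine Summable.tsum_le_tsum (fun i => ?_)
          ((memℓp_diag hc x).summable h2r)
          (((lp.memℓp x).summable h2r).mul_left _)
        rw [norm_mul, Real.mul_rpow (norm_nonneg _) (norm_nonneg _)]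
        exact mul_le_mul_of_nonneg_right
          (Real.rpow_le_rpow (norm_nonneg _) (hc _) h2r.le) (by positivity)
      have h2 : (2 : ℝ≥0∞).toReal = ((2 : ℕ) : ℝ) := by norm_num
      rw [h2, Real.rpow_natCast, Real.rpow_natCast] at hle
      show ‖y‖ ≤ C * ‖x‖
      exact le_of_pow_le_pow_left₀ two_ne_zero (mul_nonneg hC (norm_nonneg x)) hle)

lemma diag_apply (c : ℕ × ℤ → ℂ) {C : ℝ} (hc : ∀ i, ‖c i‖ ≤ C) (x : H) (i : ℕ × ℤ) :
    (diag c hc x) i = c i * x i := rfl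

lemma diag_single (c : ℕ × ℤ → ℂ) {C : ℝ} (hc : ∀ i, ‖c i‖ ≤ C) (j : ℕ × ℤ) :
    diag c hc (lp.single 2 j 1) = c j • lp.single 2 j 1 := by
  refine lp.ext (funext fun i => ?_)
  rw [lp.coeFn_smul, Pi.smul_apply, diag_apply]
  by_cases h : i = j
  · subst h
    rw [lp.single_apply_self]; simp
  · rw [lp.single_apply_ne 2 j _ h]
    simp

end Stmt15Aux

set_option maxHeartbeats 1000000

theorem stmt_15 (t : ℝ) (h0 : 0 < t) (h1 : t < 1)
    (b : lp (fun _ : ℕ × ℤ => ℂ) 2 →L[ℂ] lp (fun _ : ℕ × ℤ => ℂ) 2)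
    (hb : ∀ (n : ℕ) (k : ℤ), b (lp.single 2 (n, k) 1) =
      ((t : ℂ) ^ n) • lp.single 2 (n, k + 1) 1) :
    IsStarNormal b ∧
    spectrum ℂ (b * star b) = {x : ℂ | ∃ m : ℕ, x = ((t : ℂ)) ^ (2*m)} ∪ {0} := by
  classical
  -- coordinates via inner products
  have hcoord : ∀ (y : Stmt15Aux.H) (j : ℕ × ℤ), y j = ⟪lp.single 2 j (1:ℂ), y⟫_ℂ := by
    intro y j
    rw [lp.inner_single_left]
    simp [RCLike.inner_apply]
  -- the adjoint on basis vectors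
  have hstar : ∀ (n : ℕ) (k : ℤ), (star b) (lp.single 2 (n, k) 1) =
      ((t : ℂ) ^ n) • lp.single 2 (n, k - 1) 1 := by
    intro n k
    refine lp.ext (funext fun j => ?_)
    obtain ⟨m, l⟩ := j
    rw [hcoord ((star b) (lp.single 2 (n, k) 1)) (m, l),
      ContinuousLinearMap.star_eq_adjoint, ContinuousLinearMap.adjoint_inner_right,
      hb m l, inner_smul_left, lp.inner_single_left]
    rw [show (((t : ℂ) ^ n) • lp.single 2 (n, k - 1) 1 : Stmt15Aux.H) (m, l)
        = (t : ℂ) ^ n * (lp.single 2 (n, k - 1) (1:ℂ) : Stmt15Aux.H) (m, l) by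
      rw [lp.coeFn_smul, Pi.smul_apply, smul_eq_mul]]
    have hconj : (starRingEnd ℂ) ((t : ℂ) ^ m) = (t : ℂ) ^ m := by
      rw [map_pow, Complex.conj_ofReal]
    rw [hconj]
    by_cases hm : m = n
    · subst hm
      by_cases hl : l + 1 = k
      · have hl' : l = k - 1 := by omega
        subst hl'
        rw [show ((m : ℕ), k - 1 + 1) = ((m : ℕ), k) by simp]
        rw [lp.single_apply_self, lp.single_apply_self]
        simp [RCLike.inner_apply]
      · rw [lp.single_apply_ne 2 _ _ (by simp [Prod.ext_iff]; omega),
          lp.single_apply_ne 2 _ _ (by simp [Prod.ext_iff]; omega)]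
        simp [RCLike.inner_apply]
    · rw [lp.single_apply_ne 2 _ _ (by simp [Prod.ext_iff, hm]),
        lp.single_apply_ne 2 _ _ (by simp [Prod.ext_iff, hm])]
      simp [RCLike.inner_apply]
  -- b b* on basis vectors
  have hA : ∀ (n : ℕ) (k : ℤ), (b * star b) (lp.single 2 (n, k) 1) =
      ((t : ℂ) ^ (2 * n)) • lp.single 2 (n, k) 1 := by
    intro n k
    rw [ContinuousLinearMap.mul_apply, hstar, map_smul, hb, sub_add_cancel, smul_smul,
      ← pow_add]
    congr 2
    ring
  have hA' : ∀ (n : ℕ) (k : ℤ), (star b * b) (lp.single 2 (n, k) 1) =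
      ((t : ℂ) ^ (2 * n)) • lp.single 2 (n, k) 1 := by
    intro n k
    rw [ContinuousLinearMap.mul_apply, hb, map_smul, hstar, add_sub_cancel_right, smul_smul,
      ← pow_add]
    congr 2
    ring
  have hnormal : IsStarNormal b := by
    constructor
    refine Stmt15Aux.ext_single fun i => ?_
    obtain ⟨n, k⟩ := i
    rw [hA n k, hA' n k]
  refine ⟨hnormal, ?_⟩
  have hnorm1 : ∀ j : ℕ × ℤ, ‖lp.single (E := fun _ : ℕ × ℤ => ℂ) 2 j (1:ℂ)‖ = 1 := by
    intro j
    have := lp.norm_single (E := fun _ : ℕ × ℤ => ℂ) (p := 2) (by norm_num) j (1:ℂ)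
    simpa using this
  ext lam
  constructor
  · -- spectrum ⊆ set : contrapositive
    intro hlam
    by_contra hS
    simp only [Set.mem_union, Set.mem_setOf_eq, Set.mem_singleton_iff, not_or, not_exists] at hS
    obtain ⟨hlm, hl0⟩ := hS
    -- lower bound on |lam - t^{2m}|
    have hεex : ∃ ε > 0, ∀ m : ℕ, ε ≤ ‖lam - ((t : ℂ)) ^ (2 * m)‖ := by
      obtain ⟨N, hN⟩ : ∃ N : ℕ, (t:ℝ) ^ (2 * N) < ‖lam‖ / 2 := by
        obtain ⟨N, hN⟩ := exists_pow_lt_of_lt_one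
          (show (0:ℝ) < ‖lam‖ / 2 from by
            have h := norm_pos_iff.mpr hl0
            linarith)
          (show t ^ 2 < 1 by nlinarith)
        exact ⟨N, by rwa [pow_mul]⟩
      set F : Finset ℝ :=
        (Finset.range (N + 1)).image (fun m => ‖lam - ((t : ℂ)) ^ (2 * m)‖) with hF
      have hFne : F.Nonempty :=
        ⟨_, Finset.mem_image_of_mem _ (Finset.mem_range.mpr (Nat.lt_succ_self N))⟩
      refine ⟨min (‖lam‖ / 2) (F.min' hFne), ?_, ?_⟩
      · apply lt_min
        · simp only [norm_pos_iff] at *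
          have : ‖lam‖ > 0 := norm_pos_iff.mpr hl0
          linarith
        · obtain ⟨m, _, hmem⟩ := Finset.mem_image.mp (F.min'_mem hFne)
          rw [← hmem]
          rw [norm_pos_iff]
          exact sub_ne_zero_of_ne (hlm m)
      · intro m
        by_cases hmN : m ≤ N
        · exact le_trans (min_le_right _ _)
            (Finset.min'_le _ _ (Finset.mem_image_of_mem _
              (Finset.mem_range.mpr (Nat.lt_succ_of_le hmN))))
        · refine le_trans (min_le_left _ _) ?_
          have h2 : ‖((t : ℂ)) ^ (2 * m)‖ = (t:ℝ) ^ (2 * m) := by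
            rw [norm_pow, Complex.norm_real, Real.norm_eq_abs, abs_of_pos h0]
          have h3 : (t:ℝ) ^ (2 * m) ≤ (t:ℝ) ^ (2 * N) := by
            apply pow_le_pow_of_le_one h0.le h1.le
            omega
          have h4 := norm_sub_norm_le lam (((t : ℂ)) ^ (2 * m))
          rw [h2] at h4
          linarith [hN]
    obtain ⟨ε, hε, hεle⟩ := hεex
    set c : ℕ × ℤ → ℂ := fun i => (lam - ((t : ℂ)) ^ (2 * i.1))⁻¹ with hcdef
    have hcb : ∀ i : ℕ × ℤ, ‖c i‖ ≤ ε⁻¹ := by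
      intro i
      rw [hcdef]
      simp only [norm_inv]
      exact inv_anti₀ hε (hεle i.1)
    set D := Stmt15Aux.diag c hcb with hD
    set M := algebraMap ℂ (Stmt15Aux.H →L[ℂ] Stmt15Aux.H) lam - (b * star b) with hM
    have hMsingle : ∀ (n : ℕ) (k : ℤ), M (lp.single 2 (n, k) 1)
        = (lam - ((t : ℂ)) ^ (2 * n)) • lp.single 2 (n, k) 1 := by
      intro n k
      rw [hM, ContinuousLinearMap.sub_apply, Algebra.algebraMap_eq_smul_one,
        ContinuousLinearMap.smul_apply, ContinuousLinearMap.one_apply, hA, sub_smul]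
    have hsub_ne : ∀ n : ℕ, lam - ((t : ℂ)) ^ (2 * n) ≠ 0 :=
      fun n => sub_ne_zero_of_ne (hlm n)
    have h1 : M * D = 1 := by
      refine Stmt15Aux.ext_single fun i => ?_
      obtain ⟨n, k⟩ := i
      rw [ContinuousLinearMap.mul_apply, hD, Stmt15Aux.diag_single, map_smul, hMsingle,
        smul_smul, hcdef]
      simp only [ContinuousLinearMap.one_apply]
      rw [inv_mul_cancel₀ (hsub_ne n), one_smul]
    have h2 : D * M = 1 := by
      refine Stmt15Aux.ext_single fun i => ?_
      obtain ⟨n, k⟩ := i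
      rw [ContinuousLinearMap.mul_apply, hMsingle, map_smul, hD, Stmt15Aux.diag_single,
        smul_smul, hcdef]
      simp only [ContinuousLinearMap.one_apply]
      rw [mul_inv_cancel₀ (hsub_ne n), one_smul]
    rw [spectrum.mem_iff] at hlam
    exact hlam ⟨⟨M, D, h1, h2⟩, rfl⟩
  · rintro (⟨m, rfl⟩ | hl0)
    · rw [spectrum.mem_iff]
      intro hu
      obtain ⟨u, hu⟩ := hu
      have h0' : (algebraMap ℂ (Stmt15Aux.H →L[ℂ] Stmt15Aux.H) (((t : ℂ)) ^ (2 * m))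
          - (b * star b)) (lp.single 2 (m, 0) 1) = 0 := by
        rw [ContinuousLinearMap.sub_apply, Algebra.algebraMap_eq_smul_one,
          ContinuousLinearMap.smul_apply, ContinuousLinearMap.one_apply, hA, sub_self]
      have hx : (↑u⁻¹ : Stmt15Aux.H →L[ℂ] Stmt15Aux.H)
          ((↑u : Stmt15Aux.H →L[ℂ] Stmt15Aux.H) (lp.single 2 (m, 0) 1))
          = lp.single 2 (m, 0) 1 := by
        rw [← ContinuousLinearMap.mul_apply, u.inv_mul, ContinuousLinearMap.one_apply]
      rw [hu, h0', map_zero] at hx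
      have := hnorm1 (m, 0)
      rw [← hx] at this
      simp at this
    · subst hl0
      rw [spectrum.mem_iff]
      intro hu
      rw [map_zero, zero_sub] at hu
      have hu' : IsUnit (b * star b) := by
        have := hu.neg
        rwa [neg_neg] at this
      obtain ⟨u, hu⟩ := hu'
      set v : Stmt15Aux.H →L[ℂ] Stmt15Aux.H := ↑u⁻¹ with hv
      obtain ⟨n, hn⟩ := exists_pow_lt_of_lt_one
        (show (0:ℝ) < (‖v‖ + 1)⁻¹ by positivity) (show t ^ 2 < 1 by nlinarith)
      have hx : v ((b * star b) (lp.single 2 (n, 0) 1)) = lp.single 2 (n, 0) 1 := by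
        rw [← hu, ← ContinuousLinearMap.mul_apply, u.inv_mul, ContinuousLinearMap.one_apply]
      rw [hA n 0, map_smul] at hx
      have h1' : (1:ℝ) = ‖((t : ℂ) ^ (2 * n)) • v (lp.single 2 (n, 0) 1)‖ := by
        rw [hx, hnorm1]
      rw [norm_smul] at h1'
      have hnt : ‖(t : ℂ) ^ (2 * n)‖ = (t:ℝ) ^ (2 * n) := by
        rw [norm_pow, Complex.norm_real, Real.norm_eq_abs, abs_of_pos h0]
      rw [hnt] at h1'
      have hnv : ‖v (lp.single 2 (n, 0) 1)‖ ≤ ‖v‖ := by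
        have h := v.le_opNorm (lp.single 2 (n, 0) 1)
        rwa [hnorm1 ((n : ℕ), (0 : ℤ)), mul_one] at h
      have hpow : (t:ℝ) ^ (2 * n) = (t ^ 2) ^ n := by rw [pow_mul]
      have hvpos : (0:ℝ) < ‖v‖ + 1 := by positivity
      have hcancel : (‖v‖ + 1)⁻¹ * (‖v‖ + 1) = 1 := inv_mul_cancel₀ (ne_of_gt hvpos)
      have htpos : (0:ℝ) < (t:ℝ) ^ (2 * n) := by positivity
      nlinarith [h1', hnv, hn, hpow, hcancel, htpos,
        norm_nonneg (v (lp.single 2 (n, 0) 1))]
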